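/- arXiv:2508.10484 — 4 statements merged into one kernel-verified Lean document; each statement's English description precedes it below -/
import Mathlib

section
/- The natural density of pairs of positive integers that are coprime equals 6/π². Precisely, the number of pairs (a,b) with 1 ≤ a,b ≤ n and gcd(a,b) = 1, divided by n², tends to 6/π² as n → ∞. -/
open Filter

open Finset ArithmeticFunction Real
open scoped ArithmeticFunction.Moebius ArithmeticFunction.zeta

lemma moebius_count_eq (n : ℕ) :
    (((Finset.Icc 1 n ×ˢ Finset.Icc 1 n).filter
        fun p : ℕ × ℕ => Nat.gcd p.1 p.2 = 1).card : ℤ) =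
    ∑ d ∈ Finset.Icc 1 n, μ d * ((n / d : ℕ) : ℤ) ^ 2 := by
  classical
  have key : ∀ p ∈ Finset.Icc 1 n ×ˢ Finset.Icc 1 n,
      (if Nat.gcd (Prod.fst p) p.2 = 1 then (1 : ℤ) else 0) =
      ∑ d ∈ Finset.Icc 1 n, (if d ∣ p.1 ∧ d ∣ p.2 then μ d else 0) := by
    rintro ⟨a, b⟩ hp
    simp only [Finset.mem_product, Finset.mem_Icc] at hp
    have ha : a ≠ 0 := by omega
    have hg : Nat.gcd a b ≠ 0 := fun h => ha (Nat.eq_zero_of_gcd_eq_zero_left h)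
    have hdiv : (Nat.gcd a b).divisors =
        (Finset.Icc 1 n).filter (fun d => d ∣ a ∧ d ∣ b) := by
      ext d
      simp only [Nat.mem_divisors, Finset.mem_filter, Finset.mem_Icc, Nat.dvd_gcd_iff]
      constructor
      · rintro ⟨⟨hda, hdb⟩, -⟩
        have hd0 : d ≠ 0 := by
          rintro rfl; exact ha (Nat.eq_zero_of_zero_dvd hda)
        exact ⟨⟨Nat.one_le_iff_ne_zero.mpr hd0,
          le_trans (Nat.le_of_dvd (by omega) hda) hp.1.2⟩, hda, hdb⟩
      · rintro ⟨-, hda, hdb⟩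
        exact ⟨⟨hda, hdb⟩, hg⟩
    have h2 := congrArg (fun f : ArithmeticFunction ℤ => f (Nat.gcd a b))
      moebius_mul_coe_zeta
    simp only [coe_mul_zeta_apply, one_apply] at h2
    rw [← h2, hdiv, Finset.sum_filter]
  rw [Finset.card_filter, Nat.cast_sum]
  push_cast
  rw [Finset.sum_congr rfl key, Finset.sum_comm]
  refine Finset.sum_congr rfl fun d hd => ?_
  rw [← Finset.sum_filter]
  have hfp : (Finset.Icc 1 n ×ˢ Finset.Icc 1 n).filter
      (fun p : ℕ × ℕ => d ∣ p.1 ∧ d ∣ p.2) =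
      ((Finset.Icc 1 n).filter (fun a => d ∣ a)) ×ˢ
      ((Finset.Icc 1 n).filter (fun b => d ∣ b)) := Finset.filter_product _ _
  rw [hfp, Finset.sum_const, Finset.card_product]
  have hc : ((Finset.Icc 1 n).filter (fun a => d ∣ a)).card = n / d := by
    have : Finset.Icc 1 n = Finset.Ioc 0 n := rfl
    rw [this]
    exact Nat.Ioc_filter_dvd_card_eq_div n d
  rw [hc, nsmul_eq_mul]
  push_cast
  ring

lemma moebius_tsum_val :
    ∑' d : ℕ, (μ d : ℝ) / (d : ℝ) ^ 2 = 6 / π ^ 2 := by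
  have hs : (1 : ℝ) < (2 : ℂ).re := by norm_num
  have hzeta : LSeries (fun n => ((ζ n : ℕ) : ℂ)) 2 = (π : ℂ) ^ 2 / 6 := by
    rw [LSeries_zeta_eq_riemannZeta hs, riemannZeta_two]
  have hmul := LSeries_zeta_mul_Lseries_moebius (s := 2) hs
  have hπ : ((π : ℂ) ^ 2 / 6) ≠ 0 := by
    simp [Real.pi_ne_zero]
  have hmu : LSeries (fun n => ((μ n : ℤ) : ℂ)) 2 = 6 / (π : ℂ) ^ 2 := by
    rw [hzeta] at hmul
    rw [eq_div_iff (pow_ne_zero 2 (Complex.ofReal_ne_zero.mpr Real.pi_ne_zero))]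
    linear_combination 6 * hmul
  have hterm : ∀ n : ℕ, LSeries.term (fun n => ((μ n : ℤ) : ℂ)) 2 n
      = (((μ n : ℝ) / (n : ℝ) ^ 2 : ℝ) : ℂ) := by
    intro n
    rcases eq_or_ne n 0 with rfl | hn
    · simp [LSeries.term]
    · rw [LSeries.term_of_ne_zero hn]
      have : ((n : ℂ) ^ (2 : ℂ)) = ((n : ℝ) ^ 2 : ℝ) := by
        rw [show (2 : ℂ) = ((2 : ℕ) : ℂ) by norm_num, Complex.cpow_natCast]
        push_cast
        ring
      rw [this]
      push_cast
      ring
  have : ((∑' d : ℕ, (μ d : ℝ) / (d : ℝ) ^ 2 : ℝ) : ℂ) = 6 / (π : ℂ) ^ 2 := by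
    rw [Complex.ofReal_tsum, ← hmu]
    exact tsum_congr fun n => (hterm n).symm
  have h6 : ((6 / π ^ 2 : ℝ) : ℂ) = 6 / (π : ℂ) ^ 2 := by push_cast; ring
  exact_mod_cast this.trans h6.symm

lemma ratio_le (n d : ℕ) : ((n / d : ℕ) : ℝ) / (n : ℝ) ≤ 1 / (d : ℝ) := by
  rcases Nat.eq_zero_or_pos d with rfl | hd
  · simp
  rcases Nat.eq_zero_or_pos n with rfl | hn
  · simp
  rw [div_le_div_iff₀ (by positivity) (by positivity)]
  calc ((n / d : ℕ) : ℝ) * d ≤ n := by exact_mod_cast Nat.div_mul_le_self n d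
    _ = 1 * n := (one_mul _).symm

lemma nat_div_tendsto (d : ℕ) (hd : 1 ≤ d) :
    Tendsto (fun n : ℕ => ((n / d : ℕ) : ℝ) / (n : ℝ)) atTop (nhds (1 / (d : ℝ))) := by
  have hd' : (0 : ℝ) < d := by exact_mod_cast hd
  have hlow : Tendsto (fun n : ℕ => 1 / (d : ℝ) - 1 / (n : ℝ)) atTop (nhds (1 / (d : ℝ))) := by
    simpa using tendsto_const_nhds.sub (tendsto_one_div_atTop_nhds_zero_nat (𝕜 := ℝ))
  refine tendsto_of_tendsto_of_tendsto_of_le_of_le' hlow tendsto_const_nhds ?_ ?_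
  · filter_upwards [eventually_ge_atTop 1] with n hn
    have hn' : (0 : ℝ) < n := by exact_mod_cast hn
    set q : ℕ := n / d with hq
    have hlt : (n : ℝ) < d * q + d := by
      have hmod := Nat.mod_lt n (show 0 < d by omega)
      have hdm := Nat.div_add_mod n d
      rw [← hq] at hdm
      have : n < d * q + d := by omega
      exact_mod_cast this
    have key : (n : ℝ) - d ≤ (q : ℝ) * d := by nlinarith
    have h1 : 1 / (d : ℝ) - 1 / n = ((n : ℝ) - d) / (d * n) := by
      field_simp
    rw [h1]
    calc ((n : ℝ) - d) / (d * n) ≤ ((q : ℝ) * d) / (d * n) := by gcongr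
      _ = (q : ℝ) / n := by
          rw [mul_comm (d : ℝ) (n : ℝ)]
          rw [mul_div_mul_right _ _ (ne_of_gt hd')]
  · filter_upwards with n using ratio_le n d

/-- The natural density of pairs of coprime positive integers is `6 / π²`. -/
theorem coprime_pairs_density :
    Tendsto (fun n : ℕ =>
        (((Finset.Icc 1 n ×ˢ Finset.Icc 1 n).filter
            fun p : ℕ × ℕ => Nat.gcd p.1 p.2 = 1).card : ℝ) / (n : ℝ) ^ 2)
      atTop (nhds (6 / Real.pi ^ 2)) := by
  have hcount : ∀ n : ℕ,
      (((Finset.Icc 1 n ×ˢ Finset.Icc 1 n).filter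
          fun p : ℕ × ℕ => Nat.gcd p.1 p.2 = 1).card : ℝ) / (n : ℝ) ^ 2
      = ∑' d : ℕ, (μ d : ℝ) * (((n / d : ℕ) : ℝ) / (n : ℝ)) ^ 2 := by
    intro n
    have h1 : ((((Finset.Icc 1 n ×ˢ Finset.Icc 1 n).filter
        fun p : ℕ × ℕ => Nat.gcd p.1 p.2 = 1).card : ℝ)) =
        ∑ d ∈ Finset.Icc 1 n, (μ d : ℝ) * ((n / d : ℕ) : ℝ) ^ 2 := by
      have := congrArg (fun z : ℤ => (z : ℝ)) (moebius_count_eq n)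
      push_cast at this
      exact this
    rw [h1, Finset.sum_div]
    rw [tsum_eq_sum (s := Finset.Icc 1 n) ?_]
    · exact Finset.sum_congr rfl fun d hd => by rw [div_pow]; ring
    · intro d hd
      simp only [Finset.mem_Icc, not_and_or, not_le] at hd
      rcases hd with hd | hd
      · interval_cases d
        simp
      · have : n / d = 0 := Nat.div_eq_of_lt hd
        simp [this]
  simp only [hcount]
  rw [show (6 / Real.pi ^ 2) = ∑' d : ℕ, (μ d : ℝ) / (d : ℝ) ^ 2 from moebius_tsum_val.symm]
  apply tendsto_tsum_of_dominated_convergence (bound := fun d : ℕ => 1 / (d : ℝ) ^ 2)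
  · exact summable_one_div_nat_pow.mpr one_lt_two
  · intro d
    rcases Nat.eq_zero_or_pos d with rfl | hd
    · simp
    · have h := (nat_div_tendsto d hd).pow 2
      have := h.const_mul ((μ d : ℝ))
      convert this using 2
      rw [div_pow, one_pow, mul_one_div]
  · filter_upwards with n
    intro d
    have hnonneg : (0 : ℝ) ≤ ((n / d : ℕ) : ℝ) / (n : ℝ) := by positivity
    have hle := ratio_le n d
    have hmu : |(μ d : ℝ)| ≤ 1 := by exact_mod_cast (abs_moebius_le_one (n := d))
    rw [Real.norm_eq_abs, abs_mul, abs_pow, abs_of_nonneg hnonneg]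
    calc |(μ d : ℝ)| * (((n / d : ℕ) : ℝ) / (n : ℝ)) ^ 2
        ≤ 1 * (1 / (d : ℝ)) ^ 2 := by
          apply mul_le_mul hmu (by apply pow_le_pow_left₀ hnonneg hle) (by positivity) zero_le_one
      _ = 1 / (d : ℝ) ^ 2 := by rw [one_mul, div_pow, one_pow]
end

section
/- For integers w, m ≥ 1 with wm ≥ 2, the density of w-coprime m-tuples of positive integers equals 1/ζ(wm): the number of m-tuples (x₁,…,x_m) with 1 ≤ x_j ≤ n such that no prime power k^w with k prime divides all of x₁,…,x_m, divided by n^m, tends to 1/ζ(wm) as n → ∞. -/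
open Filter
open scoped Classical

open Finset Nat ArithmeticFunction
open scoped ArithmeticFunction.Moebius


noncomputable def wroot (w g : ℕ) : ℕ := ∏ p ∈ g.primeFactors, p ^ (g.factorization p / w)

lemma wroot_ne_zero (w g : ℕ) : wroot w g ≠ 0 :=
  Finset.prod_ne_zero_iff.mpr fun p hp =>
    pow_ne_zero _ (Nat.prime_of_mem_primeFactors hp).pos.ne'

lemma factorization_wroot (w g : ℕ) (p : ℕ) :
    (wroot w g).factorization p = g.factorization p / w := by
  rw [wroot, Nat.factorization_prod
    (fun q hq => pow_ne_zero _ (Nat.prime_of_mem_primeFactors hq).pos.ne'),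
    Finset.sum_apply']
  rw [Finset.sum_congr rfl (fun q hq => by
    rw [(Nat.prime_of_mem_primeFactors hq).factorization_pow, Finsupp.single_apply])]
  rw [Finset.sum_ite_eq' g.primeFactors p (fun q => g.factorization q / w)]
  by_cases hp : p ∈ g.primeFactors
  · simp [hp]
  · rw [if_neg hp]
    have : g.factorization p = 0 := by
      rwa [← Finsupp.notMem_support_iff, Nat.support_factorization]
    simp [this]

lemma pow_dvd_iff_dvd_wroot {w g d : ℕ} (hw : 1 ≤ w) (hg : g ≠ 0) (hd : d ≠ 0) :
    d ^ w ∣ g ↔ d ∣ wroot w g := by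
  rw [← Nat.factorization_le_iff_dvd hd (wroot_ne_zero w g),
    ← Nat.factorization_le_iff_dvd (pow_ne_zero w hd) hg,
    Nat.factorization_pow, Finsupp.le_def, Finsupp.le_def]
  refine forall_congr' fun p => ?_
  rw [factorization_wroot, Finsupp.smul_apply, smul_eq_mul,
    Nat.le_div_iff_mul_le hw, mul_comm]

lemma wroot_dvd {w g : ℕ} (hg : g ≠ 0) : wroot w g ∣ g := by
  rw [← Nat.factorization_le_iff_dvd (wroot_ne_zero w g) hg, Finsupp.le_def]
  intro p
  rw [factorization_wroot]
  exact Nat.div_le_self _ _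

lemma wroot_eq_one_iff {w g : ℕ} (hw : 1 ≤ w) (hg : g ≠ 0) :
    wroot w g = 1 ↔ ∀ p : ℕ, p.Prime → ¬ p ^ w ∣ g := by
  rw [Nat.eq_one_iff_not_exists_prime_dvd]
  refine forall_congr' fun p => imp_congr_right fun hp => not_congr ?_
  rw [hp.pow_dvd_iff_le_factorization hg]
  have h1 : p ∣ wroot w g ↔ 1 ≤ (wroot w g).factorization p := by
    conv_lhs => rw [← pow_one p]
    rw [hp.pow_dvd_iff_le_factorization (wroot_ne_zero w g)]
  rw [h1, factorization_wroot, Nat.le_div_iff_mul_le hw, one_mul]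

lemma moebius_sum_pow_dvd {w n g : ℕ} (hw : 1 ≤ w) (hg1 : 1 ≤ g) (hgn : g ≤ n) :
    ∑ d ∈ Finset.Icc 1 n, (if d ^ w ∣ g then (μ d : ℤ) else 0)
      = if ∀ p : ℕ, p.Prime → ¬ p ^ w ∣ g then 1 else 0 := by
  have hg : g ≠ 0 := by omega
  rw [← Finset.sum_filter]
  have hset : (Finset.Icc 1 n).filter (fun d => d ^ w ∣ g) = (wroot w g).divisors := by
    ext d
    simp only [Finset.mem_filter, Finset.mem_Icc, Nat.mem_divisors]
    constructor
    · rintro ⟨⟨h1, _⟩, h3⟩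
      exact ⟨(pow_dvd_iff_dvd_wroot hw hg (by omega)).mp h3, wroot_ne_zero w g⟩
    · rintro ⟨h1, h2⟩
      have hd0 : d ≠ 0 := by
        rintro rfl
        exact h2 (zero_dvd_iff.mp h1)
      have hle : d ≤ wroot w g := Nat.le_of_dvd (Nat.pos_of_ne_zero h2) h1
      have hle2 : wroot w g ≤ g := Nat.le_of_dvd (by omega) (wroot_dvd hg)
      exact ⟨⟨by omega, by omega⟩, (pow_dvd_iff_dvd_wroot hw hg hd0).mpr h1⟩
  rw [hset]
  have h2 := ArithmeticFunction.coe_mul_zeta_apply (R := ℤ)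
    (f := (μ : ArithmeticFunction ℤ)) (x := wroot w g)
  rw [ArithmeticFunction.moebius_mul_coe_zeta, ArithmeticFunction.one_apply] at h2
  rw [← h2]
  simp only [wroot_eq_one_iff hw hg]

lemma card_box_filter (m n q : ℕ) :
    ((Fintype.piFinset fun _ : Fin m => Finset.Icc 1 n).filter
        (fun f : Fin m → ℕ => ∀ j, q ∣ f j)).card = (n / q) ^ m := by
  have hset : ((Fintype.piFinset fun _ : Fin m => Finset.Icc 1 n).filter
        (fun f : Fin m → ℕ => ∀ j, q ∣ f j))
      = Fintype.piFinset fun _ : Fin m => (Finset.Icc 1 n).filter (q ∣ ·) := by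
    ext f
    simp only [Finset.mem_filter, Fintype.mem_piFinset, ← forall_and]
  rw [hset, Fintype.card_piFinset]
  have : Finset.Icc 1 n = Finset.Ioc 0 n := rfl
  simp [this, Nat.Ioc_filter_dvd_card_eq_div]

lemma count_eq (w m n : ℕ) (hw : 1 ≤ w) (hm : 1 ≤ m) :
    (((Fintype.piFinset fun _ : Fin m => Finset.Icc 1 n).filter
        fun f : Fin m → ℕ =>
          ¬ ∃ p : ℕ, p.Prime ∧ ∀ j : Fin m, p ^ w ∣ f j).card : ℤ)
    = ∑ d ∈ Finset.Icc 1 n, (μ d : ℤ) * ((n / d ^ w : ℕ) : ℤ) ^ m := by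
  rw [Finset.card_filter, Nat.cast_sum]
  simp only [apply_ite (Nat.cast : ℕ → ℤ), Nat.cast_one, Nat.cast_zero]
  have step1 : ∀ f ∈ Fintype.piFinset fun _ : Fin m => Finset.Icc 1 n,
      (if ¬ ∃ p : ℕ, p.Prime ∧ ∀ j : Fin m, p ^ w ∣ f j then (1 : ℤ) else 0)
        = ∑ d ∈ Finset.Icc 1 n, (if ∀ j, d ^ w ∣ f j then (μ d : ℤ) else 0) := by
    intro f hf
    simp only [Fintype.mem_piFinset, Finset.mem_Icc] at hf
    set g := Finset.univ.gcd f with hgdef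
    have hdvd : ∀ x : ℕ, (∀ j, x ∣ f j) ↔ x ∣ g := by
      intro x
      constructor
      · intro h; exact Finset.dvd_gcd fun j _ => h j
      · intro h j; exact h.trans (Finset.gcd_dvd (Finset.mem_univ j))
    obtain ⟨j0⟩ : Nonempty (Fin m) := ⟨⟨0, by omega⟩⟩
    have hgf : g ∣ f j0 := Finset.gcd_dvd (Finset.mem_univ j0)
    have hg1 : 1 ≤ g := Nat.pos_of_ne_zero fun h => by
      have h1 := hf j0
      rw [h] at hgf
      have := zero_dvd_iff.mp hgf
      omega
    have hgn : g ≤ n := le_trans (Nat.le_of_dvd (by have := hf j0; omega) hgf) (hf j0).2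
    have hsum : ∑ d ∈ Finset.Icc 1 n, (if ∀ j, d ^ w ∣ f j then (μ d : ℤ) else 0)
        = ∑ d ∈ Finset.Icc 1 n, (if d ^ w ∣ g then (μ d : ℤ) else 0) :=
      Finset.sum_congr rfl fun d _ => if_congr (hdvd _) rfl rfl
    rw [hsum, moebius_sum_pow_dvd hw hg1 hgn]
    refine if_congr ?_ rfl rfl
    simp only [not_exists, not_and]
    exact forall_congr' fun p => imp_congr_right fun _ => not_congr (hdvd _)
  rw [Finset.sum_congr rfl step1, Finset.sum_comm]
  refine Finset.sum_congr rfl fun d _ => ?_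
  rw [← Finset.sum_filter, Finset.sum_const, card_box_filter m n (d ^ w),
    nsmul_eq_mul, mul_comm]
  push_cast
  ring

lemma tendsto_nat_div_real {q : ℕ} (hq : 1 ≤ q) :
    Tendsto (fun n : ℕ => ((n / q : ℕ) : ℝ) / n) atTop (nhds (1 / q)) := by
  rw [← tendsto_sub_nhds_zero_iff]
  apply squeeze_zero_norm' (a := fun n : ℕ => (1 : ℝ) / n)
  · filter_upwards [eventually_ge_atTop 1] with n hn
    have hq0 : (0:ℝ) < q := by positivity
    have hn0 : (0:ℝ) < n := by exact_mod_cast hn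
    have hmod := Nat.div_add_mod n q
    have hmodlt : n % q < q := Nat.mod_lt _ (by omega)
    have hcast : (q:ℝ) * ((n / q : ℕ):ℝ) + ((n % q : ℕ):ℝ) = n := by exact_mod_cast hmod
    have heq : ((n / q : ℕ) : ℝ) / n - 1 / q = -(((n % q : ℕ) : ℝ) / (n * q)) := by
      field_simp
      linarith
    rw [heq, norm_neg, Real.norm_eq_abs, abs_of_nonneg (by positivity)]
    rw [div_le_div_iff₀ (by positivity) hn0]
    have : ((n % q : ℕ):ℝ) ≤ q := by exact_mod_cast hmodlt.le
    nlinarith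
  · exact tendsto_one_div_atTop_nhds_zero_nat

lemma tendsto_nat_div_complex {q : ℕ} (hq : 1 ≤ q) :
    Tendsto (fun n : ℕ => ((n / q : ℕ) : ℂ) / n) atTop (nhds (1 / q)) := by
  have h := (Complex.continuous_ofReal.tendsto _).comp (tendsto_nat_div_real hq)
  simp only [Function.comp_def, Complex.ofReal_div, Complex.ofReal_natCast,
    Complex.ofReal_one] at h
  exact h

lemma tsum_moebius_div (k : ℕ) (hk : 2 ≤ k) :
    ∑' d : ℕ, (μ d : ℂ) / (d : ℂ) ^ k = (riemannZeta k)⁻¹ := by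
  have hs : 1 < ((k : ℕ) : ℂ).re := by
    simp only [Complex.natCast_re]
    exact_mod_cast hk.trans_lt' one_lt_two
  have h1 := ArithmeticFunction.LSeries_zeta_mul_Lseries_moebius (s := (k:ℂ)) hs
  rw [ArithmeticFunction.LSeries_zeta_eq_riemannZeta hs] at h1
  rw [inv_eq_of_mul_eq_one_right h1]
  unfold LSeries
  refine tsum_congr fun d => ?_
  rcases eq_or_ne d 0 with rfl | hd
  · simp [LSeries.term]
  · rw [LSeries.term_of_ne_zero hd, Complex.cpow_natCast]


/-- Benkoski (1976): for `w, m ≥ 1` with `wm ≥ 2`, the density of `w`-coprime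
`m`-tuples of positive integers (no `p^w` with `p` prime divides all entries)
is `1 / ζ(wm)`. -/
theorem benkoski_w_coprime_density (w m : ℕ) (hw : 1 ≤ w) (hm : 1 ≤ m)
    (hwm : 2 ≤ w * m) :
    Tendsto (fun n : ℕ =>
        (((Fintype.piFinset fun _ : Fin m => Finset.Icc 1 n).filter
            fun f : Fin m → ℕ =>
              ¬ ∃ p : ℕ, p.Prime ∧ ∀ j : Fin m, p ^ w ∣ f j).card : ℂ) / (n : ℂ) ^ m)
      atTop (nhds (riemannZeta (w * m))⁻¹) := by
  have hm0 : m ≠ 0 := by omega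
  set F : ℕ → ℕ → ℂ := fun n d => ((μ d : ℤ) : ℂ) * (((n / d ^ w : ℕ) : ℂ) / n) ^ m with hF
  have hA : ∀ n : ℕ, 1 ≤ n →
      ((((Fintype.piFinset fun _ : Fin m => Finset.Icc 1 n).filter
          fun f : Fin m → ℕ =>
            ¬ ∃ p : ℕ, p.Prime ∧ ∀ j : Fin m, p ^ w ∣ f j).card : ℂ) / (n : ℂ) ^ m)
        = ∑' d, F n d := by
    intro n hn
    have hvanish : ∀ d ∉ Finset.Icc 1 n, F n d = 0 := by
      intro d hd
      simp only [Finset.mem_Icc, not_and, not_le] at hd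
      rcases Nat.eq_zero_or_pos d with rfl | hd1
      · simp [hF]
      · have hdn : n < d := hd hd1
        have hz : n / d ^ w = 0 :=
          Nat.div_eq_of_lt (lt_of_lt_of_le hdn (Nat.le_self_pow (by omega) d))
        simp [hF, hz, zero_pow hm0]
    rw [tsum_eq_sum hvanish]
    have hcountC := congrArg (fun z : ℤ => (z : ℂ)) (count_eq w m n hw hm)
    simp only [Int.cast_sum, Int.cast_mul, Int.cast_pow, Int.cast_natCast] at hcountC
    rw [hcountC, Finset.sum_div]
    refine Finset.sum_congr rfl fun d _ => ?_
    simp only [hF]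
    rw [div_pow, mul_div_assoc]
  have hbound : ∀ (n d : ℕ), ‖F n d‖ ≤ (1:ℝ) / (d:ℝ) ^ (w * m) := by
    intro n d
    rcases Nat.eq_zero_or_pos d with rfl | hd1
    · simp only [hF, ArithmeticFunction.map_zero, Int.cast_zero, zero_mul, norm_zero]
      positivity
    · have hq1 : 1 ≤ d ^ w := Nat.one_le_pow _ _ hd1
      simp only [hF]
      rw [norm_mul, norm_pow]
      have h1 : ‖((μ d : ℤ) : ℂ)‖ ≤ 1 := by
        rw [Complex.norm_intCast]
        have := ArithmeticFunction.abs_moebius_le_one (n := d)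
        exact_mod_cast this
      have h2 : ‖((n / d ^ w : ℕ) : ℂ) / (n:ℂ)‖ ≤ 1 / (d:ℝ) ^ w := by
        rw [norm_div, Complex.norm_natCast, Complex.norm_natCast]
        rcases Nat.eq_zero_or_pos n with rfl | hn1
        · simp
        · have hle : ((n / d ^ w : ℕ) : ℝ) ≤ (n:ℝ) / ((d ^ w : ℕ):ℝ) := Nat.cast_div_le
          have hn0 : (0:ℝ) < n := by exact_mod_cast hn1
          have hq0 : (0:ℝ) < ((d ^ w : ℕ):ℝ) := by exact_mod_cast hq1
          calc ((n / d ^ w : ℕ) : ℝ) / n ≤ ((n:ℝ) / ((d ^ w : ℕ):ℝ)) / n := by gcongr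
            _ = 1 / (d:ℝ) ^ w := by
                push_cast
                field_simp
      calc ‖((μ d : ℤ) : ℂ)‖ * ‖((n / d ^ w : ℕ) : ℂ) / (n:ℂ)‖ ^ m
          ≤ 1 * (1 / (d:ℝ) ^ w) ^ m :=
            mul_le_mul h1 (pow_le_pow_left₀ (norm_nonneg _) h2 m)
              (pow_nonneg (norm_nonneg _) m) zero_le_one
        _ = 1 / (d:ℝ) ^ (w * m) := by rw [one_mul, div_pow, one_pow, ← pow_mul]
  have hsummable : Summable (fun d : ℕ => (1:ℝ) / (d:ℝ) ^ (w * m)) :=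
    Real.summable_one_div_nat_pow.mpr hwm
  have hlim : ∀ d : ℕ, Tendsto (fun n => F n d) atTop
      (nhds (((μ d : ℤ) : ℂ) * (1 / ((d:ℂ)) ^ w) ^ m)) := by
    intro d
    rcases Nat.eq_zero_or_pos d with rfl | hd1
    · simp only [hF, ArithmeticFunction.map_zero, Int.cast_zero, zero_mul]
      exact tendsto_const_nhds
    · have hq1 : 1 ≤ d ^ w := Nat.one_le_pow _ _ hd1
      have h := ((tendsto_nat_div_complex hq1).pow m).const_mul (((μ d : ℤ)) : ℂ)
      simp only [hF]
      convert h using 3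
      push_cast
      ring
  have hB := tendsto_tsum_of_dominated_convergence hsummable hlim
    (Filter.Eventually.of_forall hbound)
  have hC : ∑' d : ℕ, ((μ d : ℤ) : ℂ) * (1 / ((d:ℂ)) ^ w) ^ m = (riemannZeta (w * m))⁻¹ := by
    rw [show ((w:ℂ) * m : ℂ) = ((w * m : ℕ) : ℂ) by push_cast; ring,
      ← tsum_moebius_div (w * m) hwm]
    refine tsum_congr fun d => ?_
    rw [div_pow, one_pow, ← pow_mul, mul_one_div]
  rw [hC] at hB
  refine Tendsto.congr' ?_ hB
  filter_upwards [eventually_ge_atTop 1] with n hn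
  exact (hA n hn).symm
end

section
/- The density of squarefree positive integers is 1/ζ(2) = 6/π²: the number of squarefree integers in [1,n] divided by n tends to 6/π² as n → ∞. -/
open Filter
open scoped Classical

open ArithmeticFunction Finset
open scoped ArithmeticFunction.Moebius

lemma abs_mu_le (d : ℕ) : |((μ d : ℝ))| ≤ 1 := by
  have := abs_moebius_le_one (n := d)
  calc |((μ d : ℝ))| = ((|μ d| : ℤ) : ℝ) := by push_cast; ring
    _ ≤ 1 := by exact_mod_cast this

lemma summable_mu_div_sq : Summable (fun d : ℕ => (μ d : ℝ) / (d : ℝ) ^ 2) := by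
  apply Summable.of_abs
  apply Summable.of_nonneg_of_le (fun d => abs_nonneg _) (fun d => ?_)
    (Real.summable_one_div_nat_pow.mpr one_lt_two)
  rw [abs_div, abs_pow, Nat.abs_cast]
  rcases eq_or_ne d 0 with rfl | hd
  · simp
  · have hd' : (0:ℝ) < (d:ℝ) ^ 2 := by
      have : (0:ℝ) < (d:ℝ) := by exact_mod_cast Nat.pos_of_ne_zero hd
      positivity
    exact div_le_div_of_nonneg_right (abs_mu_le d) hd'.le |>.trans_eq rfl

lemma hasSum_mu : HasSum (fun d : ℕ => (μ d : ℝ) / (d : ℝ) ^ 2) (6 / Real.pi ^ 2) := by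
  have hA := summable_mu_div_sq.hasSum
  set A := ∑' d : ℕ, (μ d : ℝ) / (d : ℝ) ^ 2 with hAdef
  have hμC : HasSum (fun n : ℕ => (((μ n : ℝ) / (n : ℝ) ^ 2 : ℝ) : ℂ)) ((A : ℝ) : ℂ) :=
    Complex.hasSum_ofReal.mpr hA
  have hζC : HasSum (fun n : ℕ => ((1 / (n : ℝ) ^ 2 : ℝ) : ℂ)) ((Real.pi ^ 2 / 6 : ℝ) : ℂ) :=
    Complex.hasSum_ofReal.mpr hasSum_zeta_two
  have hμL : LSeries (fun n => ((μ n : ℤ) : ℂ)) 2 = (A : ℂ) := by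
    rw [LSeries, ← hμC.tsum_eq]
    apply tsum_congr
    intro n
    rcases eq_or_ne n 0 with rfl | hn
    · simp [LSeries.term]
    · rw [LSeries.term_of_ne_zero hn, show (2:ℂ) = ((2:ℕ):ℂ) by norm_num,
        Complex.cpow_natCast]
      push_cast
      ring
  have hζL : LSeries 1 2 = ((Real.pi ^ 2 / 6 : ℝ) : ℂ) := by
    rw [LSeries, ← hζC.tsum_eq]
    apply tsum_congr
    intro n
    rcases eq_or_ne n 0 with rfl | hn
    · simp [LSeries.term]
    · rw [LSeries.term_of_ne_zero hn, show (2:ℂ) = ((2:ℕ):ℂ) by norm_num,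
        Complex.cpow_natCast]
      push_cast
      simp [Pi.one_apply]
  have key := LSeries_one_mul_Lseries_moebius (s := 2) (by norm_num)
  rw [hζL, hμL] at key
  have hmul : (Real.pi ^ 2 / 6) * A = 1 := by
    have : (((Real.pi ^ 2 / 6) * A : ℝ) : ℂ) = ((1 : ℝ) : ℂ) := by rw [Complex.ofReal_mul, Complex.ofReal_one]; exact key
    exact_mod_cast this
  have hπ : Real.pi ≠ 0 := Real.pi_ne_zero
  have hAval : A = 6 / Real.pi ^ 2 := by
    field_simp at hmul ⊢
    linarith
  rwa [hAval] at hA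

def sqcore (k : ℕ) : ℕ := ∏ p ∈ k.primeFactors.filter (fun p => p ^ 2 ∣ k), p

lemma sqcore_dvd (k : ℕ) : sqcore k ∣ k := by
  rcases eq_or_ne k 0 with rfl | hk
  · exact dvd_zero _
  · exact (Finset.prod_dvd_prod_of_subset _ _ _ (Finset.filter_subset _ _)).trans
      (Nat.prod_primeFactors_dvd k)

lemma sqcore_ne_zero {k : ℕ} (hk : k ≠ 0) : sqcore k ≠ 0 := by
  apply Finset.prod_ne_zero_iff.mpr
  intro p hp
  exact (Nat.prime_of_mem_primeFactors (Finset.mem_filter.mp hp).1).ne_zero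

lemma mem_filter_iff {k p : ℕ} (hk : k ≠ 0) :
    p ∈ k.primeFactors.filter (fun p => p ^ 2 ∣ k) ↔ p.Prime ∧ p ^ 2 ∣ k := by
  rw [Finset.mem_filter, Nat.mem_primeFactors]
  constructor
  · rintro ⟨⟨hp, -, -⟩, h2⟩; exact ⟨hp, h2⟩
  · rintro ⟨hp, h2⟩
    exact ⟨⟨hp, dvd_trans (dvd_pow_self p two_ne_zero) h2, hk⟩, h2⟩

lemma sq_dvd_iff_dvd_sqcore {k d : ℕ} (hk : k ≠ 0) (hd : Squarefree d) :
    d ^ 2 ∣ k ↔ d ∣ sqcore k := by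
  have hd0 : d ≠ 0 := hd.ne_zero
  constructor
  · intro h
    have hsub : d.primeFactors ⊆ k.primeFactors.filter (fun p => p ^ 2 ∣ k) := by
      intro p hp
      have hpp := Nat.prime_of_mem_primeFactors hp
      have hpd := Nat.dvd_of_mem_primeFactors hp
      exact (mem_filter_iff hk).mpr ⟨hpp, dvd_trans (pow_dvd_pow_of_dvd hpd 2) h⟩
    calc d = ∏ p ∈ d.primeFactors, p := (Nat.prod_primeFactors_of_squarefree hd).symm
      _ ∣ sqcore k := Finset.prod_dvd_prod_of_subset _ _ _ hsub
  · intro h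
    have hsub : d.primeFactors ⊆ k.primeFactors.filter (fun p => p ^ 2 ∣ k) := by
      intro p hp
      have hpp := Nat.prime_of_mem_primeFactors hp
      have hpc : p ∣ sqcore k := (Nat.dvd_of_mem_primeFactors hp).trans h
      have := (Prime.dvd_finset_prod_iff hpp.prime _).mp hpc
      obtain ⟨q, hq, hpq⟩ := this
      have hqp := (mem_filter_iff hk).mp hq
      have : p = q := ((Nat.prime_dvd_prime_iff_eq hpp hqp.1).mp hpq)
      rwa [this]
    rw [← Nat.factorization_le_iff_dvd (pow_ne_zero 2 hd0) hk]
    intro p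
    rw [Nat.factorization_pow]
    simp only [Finsupp.smul_apply, smul_eq_mul]
    rcases Nat.eq_zero_or_pos (d.factorization p) with h0 | hpos
    · simp [h0]
    · have hp_mem : p ∈ d.primeFactors := by
        rw [← Nat.support_factorization]
        exact Finsupp.mem_support_iff.mpr (Nat.pos_iff_ne_zero.mp hpos)
      have hpp := Nat.prime_of_mem_primeFactors hp_mem
      have h1 : d.factorization p ≤ 1 := hd.natFactorization_le_one p
      have h2 : (2 : ℕ) ≤ k.factorization p := by
        have := ((mem_filter_iff hk).mp (hsub hp_mem)).2
        exact (Nat.Prime.pow_dvd_iff_le_factorization hpp hk).mp this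
      omega

lemma sqcore_eq_one_iff {k : ℕ} (hk : k ≠ 0) : sqcore k = 1 ↔ Squarefree k := by
  constructor
  · intro h
    rw [Nat.squarefree_iff_prime_squarefree]
    intro p hp hdvd
    have hmem : p ∈ k.primeFactors.filter (fun q => q ^ 2 ∣ k) :=
      (mem_filter_iff hk).mpr ⟨hp, by rwa [pow_two]⟩
    have : p ∣ sqcore k := Finset.dvd_prod_of_mem _ hmem
    rw [h] at this
    exact hp.one_lt.ne' (Nat.dvd_one.mp this)
  · intro h
    apply Finset.prod_eq_one
    intro p hp
    exfalso
    have := (mem_filter_iff hk).mp hp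
    exact Nat.squarefree_iff_prime_squarefree.mp h p this.1 (by rw [← pow_two]; exact this.2)

lemma indicator_eq {n k : ℕ} (hk : k ∈ Finset.Icc 1 n) :
    (∑ d ∈ Finset.Icc 1 n, if d ^ 2 ∣ k then (μ d : ℤ) else 0)
      = if Squarefree k then 1 else 0 := by
  obtain ⟨hk1, hkn⟩ := Finset.mem_Icc.mp hk
  have hk0 : k ≠ 0 := by omega
  have step1 : (∑ d ∈ Finset.Icc 1 n, if d ^ 2 ∣ k then (μ d : ℤ) else 0)
      = ∑ d ∈ Finset.Icc 1 n, if d ∣ sqcore k then (μ d : ℤ) else 0 := by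
    apply Finset.sum_congr rfl
    intro d _
    rcases eq_or_ne (μ d) 0 with h0 | h0
    · simp [h0]
    · have hd := moebius_ne_zero_iff_squarefree.mp h0
      exact if_congr (sq_dvd_iff_dvd_sqcore hk0 hd) rfl rfl
  have hfilter : (Finset.Icc 1 n).filter (fun d => d ∣ sqcore k) = (sqcore k).divisors := by
    ext d
    rw [Finset.mem_filter, Nat.mem_divisors, Finset.mem_Icc]
    constructor
    · rintro ⟨-, h⟩; exact ⟨h, sqcore_ne_zero hk0⟩
    · rintro ⟨h, -⟩
      refine ⟨⟨?_, ?_⟩, h⟩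
      · exact Nat.one_le_iff_ne_zero.mpr (fun h0 => sqcore_ne_zero hk0 (zero_dvd_iff.mp (h0 ▸ h)))
      · exact le_trans (Nat.le_of_dvd (Nat.pos_of_ne_zero (sqcore_ne_zero hk0)) h)
          (le_trans (Nat.le_of_dvd (Nat.pos_of_ne_zero hk0) (sqcore_dvd k)) hkn)
  rw [step1, ← Finset.sum_filter, hfilter]
  have := congrFun (congrArg (fun f => f.toFun) moebius_mul_coe_zeta) (sqcore k)
  have h2 : (∑ d ∈ (sqcore k).divisors, μ d) = if sqcore k = 1 then 1 else 0 := by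
    rw [← coe_mul_zeta_apply, moebius_mul_coe_zeta, one_apply]
  rw [h2]
  congr 1
  rw [eq_iff_iff]
  exact ⟨fun h => (sqcore_eq_one_iff hk0).mp h, fun h => (sqcore_eq_one_iff hk0).mpr h⟩

lemma count_eq_s3 (n : ℕ) :
    ((((Finset.Icc 1 n).filter (fun k : ℕ => Squarefree k)).card : ℤ))
      = ∑ d ∈ Finset.Icc 1 n, (μ d : ℤ) * (n / d ^ 2 : ℕ) := by
  classical
  have h1 : (((Finset.Icc 1 n).filter (fun k : ℕ => Squarefree k)).card : ℤ)
      = ∑ k ∈ Finset.Icc 1 n, if Squarefree k then (1 : ℤ) else 0 := by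
    rw [Finset.card_filter]
    push_cast
    simp
  rw [h1]
  rw [Finset.sum_congr rfl (fun k hk => (indicator_eq hk).symm), Finset.sum_comm]
  apply Finset.sum_congr rfl
  intro d _
  rw [← Finset.sum_filter]
  rw [Finset.sum_const, nsmul_eq_mul, mul_comm]
  congr 1
  have : Finset.Icc 1 n = Finset.Ioc 0 n := rfl
  rw [this]
  exact_mod_cast Nat.Ioc_filter_dvd_card_eq_div n (d ^ 2)

noncomputable def uu (d : ℕ) : ℝ := 1 / (d : ℝ) ^ 2

lemma summable_uu : Summable uu := Real.summable_one_div_nat_pow.mpr one_lt_two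

noncomputable def tailSum (m : ℕ) : ℝ := ∑' k : ℕ, uu (k + m)

lemma tendsto_sqrt_atTop : Tendsto (fun n : ℕ => Nat.sqrt n) atTop atTop := by
  apply tendsto_atTop_atTop.mpr
  intro b
  exact ⟨b ^ 2, fun n hn => by
    calc b = Nat.sqrt (b ^ 2) := (Nat.sqrt_eq' b).symm
      _ ≤ Nat.sqrt n := Nat.sqrt_le_sqrt hn⟩

lemma tendsto_T : Tendsto (fun n : ℕ => ∑ d ∈ Finset.Icc 1 n, (μ d : ℝ) / (d : ℝ) ^ 2)
    atTop (nhds (6 / Real.pi ^ 2)) := by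
  have h := hasSum_mu.tendsto_sum_nat
  have h2 := h.comp (tendsto_add_atTop_nat 1)
  convert h2 using 2 with n
  rw [Function.comp_apply, Finset.range_eq_Ico, Finset.Ico_add_one_right_eq_Icc]
  have : Finset.Icc 0 n = insert 0 (Finset.Icc 1 n) := by
    ext d
    simp only [Finset.mem_Icc, Finset.mem_insert]
    omega
  rw [this, Finset.sum_insert (by simp)]
  simp

/-- The density of squarefree positive integers is `6 / π² = 1 / ζ(2)`. -/
theorem squarefree_density :
    Tendsto (fun n : ℕ =>
        (((Finset.Icc 1 n).filter (fun k : ℕ => Squarefree k)).card : ℝ) / (n : ℝ))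
      atTop (nhds (6 / Real.pi ^ 2)) := by
  set Q : ℕ → ℝ := fun n =>
    (((Finset.Icc 1 n).filter (fun k : ℕ => Squarefree k)).card : ℝ) / (n : ℝ) with hQ
  set T : ℕ → ℝ := fun n => ∑ d ∈ Finset.Icc 1 n, (μ d : ℝ) / (d : ℝ) ^ 2 with hT
  -- the error bound
  have key : ∀ n : ℕ, 1 ≤ n → |Q n - T n| ≤
      (Nat.sqrt n : ℝ) / n + tailSum (Nat.sqrt n + 1) := by
    intro n hn
    have hn0 : (0:ℝ) < n := by exact_mod_cast hn
    have hcount : ((((Finset.Icc 1 n).filter (fun k : ℕ => Squarefree k)).card : ℝ))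
        = ∑ d ∈ Finset.Icc 1 n, (μ d : ℝ) * ((n / d ^ 2 : ℕ) : ℝ) := by
      calc ((((Finset.Icc 1 n).filter (fun k : ℕ => Squarefree k)).card : ℝ))
          = (((((Finset.Icc 1 n).filter (fun k : ℕ => Squarefree k)).card : ℤ)) : ℝ) := by
            norm_num
        _ = (((∑ d ∈ Finset.Icc 1 n, (μ d : ℤ) * (n / d ^ 2 : ℕ)) : ℤ) : ℝ) := by
            rw [count_eq_s3 n]
        _ = ∑ d ∈ Finset.Icc 1 n, (μ d : ℝ) * ((n / d ^ 2 : ℕ) : ℝ) := by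
            push_cast
            rfl
    have hQn : Q n = ∑ d ∈ Finset.Icc 1 n, (μ d : ℝ) * ((n / d ^ 2 : ℕ) : ℝ) / n := by
      show ((((Finset.Icc 1 n).filter (fun k : ℕ => Squarefree k)).card : ℝ)) / n = _
      rw [hcount, Finset.sum_div]
    have hdiff : Q n - T n
        = ∑ d ∈ Finset.Icc 1 n, (μ d : ℝ) * (((n / d ^ 2 : ℕ) : ℝ) / n - 1 / (d:ℝ) ^ 2) := by
      rw [hQn, hT, ← Finset.sum_sub_distrib]
      apply Finset.sum_congr rfl
      intro d _
      ring
    rw [hdiff]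
    set s := Nat.sqrt n with hs
    have hsn : s ≤ n := Nat.sqrt_le_self n
    -- pointwise bound
    have hbound : ∀ d ∈ Finset.Icc 1 n,
        |(μ d : ℝ) * (((n / d ^ 2 : ℕ) : ℝ) / n - 1 / (d:ℝ) ^ 2)|
          ≤ if d ≤ s then 1 / (n:ℝ) else uu d := by
      intro d hd
      obtain ⟨hd1, hdn⟩ := Finset.mem_Icc.mp hd
      have hd0 : (0:ℝ) < (d:ℝ) ^ 2 := by
        have : (0:ℝ) < (d:ℝ) := by exact_mod_cast hd1
        positivity
      rw [abs_mul]
      have h1 : |(μ d : ℝ)| ≤ 1 := abs_mu_le d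
      have h2 : |(((n / d ^ 2 : ℕ) : ℝ) / n - 1 / (d:ℝ) ^ 2)| ≤ if d ≤ s then 1 / (n:ℝ) else uu d := by
        by_cases hcase : d ≤ s
        · rw [if_pos hcase]
          have hd2n : d ^ 2 ≤ n := by
            calc d ^ 2 ≤ s ^ 2 := Nat.pow_le_pow_left hcase 2
              _ ≤ n := Nat.sqrt_le' n
          set q := n / d ^ 2 with hq
          set r := n % d ^ 2 with hr
          have hqr : d ^ 2 * q + r = n := Nat.div_add_mod n (d ^ 2)
          have hrlt : r < d ^ 2 := Nat.mod_lt n (by positivity)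
          have hqrR : (d:ℝ) ^ 2 * (q:ℝ) + (r:ℝ) = (n:ℝ) := by exact_mod_cast hqr
          have hrltR : (r:ℝ) < (d:ℝ) ^ 2 := by exact_mod_cast hrlt
          rw [abs_sub_comm, abs_of_nonneg]
          · rw [div_sub_div _ _ (ne_of_gt hd0) (ne_of_gt hn0), div_le_div_iff₀ (by positivity) hn0]
            nlinarith
          · rw [sub_nonneg, div_le_div_iff₀ hn0 hd0]
            nlinarith
        · rw [if_neg hcase]
          push_neg at hcase
          have hlt : n < d ^ 2 := Nat.sqrt_lt'.mp (by omega : Nat.sqrt n < d)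
          rw [Nat.div_eq_of_lt hlt]
          have he : ((0:ℕ):ℝ) / n - 1 / (d:ℝ) ^ 2 = -(1 / (d:ℝ) ^ 2) := by simp
          rw [he, abs_neg, abs_of_nonneg (by positivity)]
          exact le_refl _
      calc |(μ d : ℝ)| * |(((n / d ^ 2 : ℕ) : ℝ) / n - 1 / (d:ℝ) ^ 2)|
          ≤ 1 * |(((n / d ^ 2 : ℕ) : ℝ) / n - 1 / (d:ℝ) ^ 2)| := by
            apply mul_le_mul_of_nonneg_right h1 (abs_nonneg _)
        _ = |(((n / d ^ 2 : ℕ) : ℝ) / n - 1 / (d:ℝ) ^ 2)| := one_mul _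
        _ ≤ _ := h2
    calc |∑ d ∈ Finset.Icc 1 n, (μ d : ℝ) * (((n / d ^ 2 : ℕ) : ℝ) / n - 1 / (d:ℝ) ^ 2)|
        ≤ ∑ d ∈ Finset.Icc 1 n, |(μ d : ℝ) * (((n / d ^ 2 : ℕ) : ℝ) / n - 1 / (d:ℝ) ^ 2)| :=
          Finset.abs_sum_le_sum_abs _ _
      _ ≤ ∑ d ∈ Finset.Icc 1 n, (if d ≤ s then 1 / (n:ℝ) else uu d) :=
          Finset.sum_le_sum hbound
      _ = (∑ d ∈ Finset.Icc 1 s, (1 / (n:ℝ)))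
          + ∑ d ∈ Finset.Ioc s n, uu d := by
          rw [Finset.sum_ite]
          congr 1
          · apply Finset.sum_congr _ (fun _ _ => rfl)
            ext d
            simp only [Finset.mem_filter, Finset.mem_Icc]
            omega
          · apply Finset.sum_congr _ (fun _ _ => rfl)
            ext d
            simp only [Finset.mem_filter, Finset.mem_Icc, Finset.mem_Ioc]
            omega
      _ ≤ (Nat.sqrt n : ℝ) / n + tailSum (s + 1) := by
          apply add_le_add
          · rw [Finset.sum_const, Nat.card_Icc]
            simp only [nsmul_eq_mul]
            apply le_of_eq
            rw [Nat.add_sub_cancel, mul_one_div]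
          · have hsub : Finset.Ioc s n ⊆ (Finset.range n).image (fun k => k + (s + 1)) := by
              intro d hd
              obtain ⟨h1, h2⟩ := Finset.mem_Ioc.mp hd
              apply Finset.mem_image.mpr
              exact ⟨d - (s + 1), Finset.mem_range.mpr (by omega), by omega⟩
            have hnonneg : ∀ d : ℕ, 0 ≤ uu d := fun d => by unfold uu; positivity
            calc ∑ d ∈ Finset.Ioc s n, uu d
                ≤ ∑ d ∈ (Finset.range n).image (fun k => k + (s + 1)), uu d :=
                  Finset.sum_le_sum_of_subset_of_nonneg hsub (fun d _ _ => hnonneg d)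
              _ = ∑ k ∈ Finset.range n, uu (k + (s + 1)) :=
                  Finset.sum_image (fun a _ b _ h => by omega)
              _ ≤ tailSum (s + 1) :=
                  Summable.sum_le_tsum (Finset.range n) (fun k _ => hnonneg _)
                    ((summable_nat_add_iff (s + 1)).mpr summable_uu)
  -- limits of the error bound
  have hb1 : Tendsto (fun n : ℕ => (Nat.sqrt n : ℝ) / n) atTop (nhds 0) := by
    apply squeeze_zero_norm' ?_ (tendsto_one_div_atTop_nhds_zero_nat.comp tendsto_sqrt_atTop)
    filter_upwards [eventually_ge_atTop 1] with n hn
    have hs1 : 1 ≤ Nat.sqrt n := Nat.sqrt_pos.mpr (by omega)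
    have hsR : (0:ℝ) < (Nat.sqrt n : ℝ) := by exact_mod_cast hs1
    have hnR : (0:ℝ) < (n : ℝ) := by exact_mod_cast hn
    rw [Real.norm_eq_abs, abs_of_nonneg (by positivity)]
    rw [Function.comp_apply, div_le_div_iff₀ hnR hsR]
    have hss : Nat.sqrt n ^ 2 ≤ n := Nat.sqrt_le' n
    have : (Nat.sqrt n : ℝ) ^ 2 ≤ n := by exact_mod_cast hss
    nlinarith
  have hb2 : Tendsto (fun n : ℕ => tailSum (Nat.sqrt n + 1)) atTop (nhds 0) := by
    have h := tendsto_sum_nat_add uu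
    exact h.comp ((tendsto_add_atTop_nat 1).comp tendsto_sqrt_atTop)
  have hdiff0 : Tendsto (fun n : ℕ => Q n - T n) atTop (nhds 0) := by
    apply squeeze_zero_norm' ?_ (by simpa using hb1.add hb2)
    filter_upwards [eventually_ge_atTop 1] with n hn
    exact key n hn
  have := tendsto_T.add hdiff0
  rw [add_zero] at this
  convert this using 2 with n
  rw [hT]
  ring
end

section
/- The unit group of the ring of S-integers of a function field K over 𝔽_q with |S| = r + 1 is isomorphic to ℤ^r × 𝔽_q^×. -/
section FunctionFieldModel

variable {Fq K Place : Type*} [Field Fq] [Fintype Fq] [Field K] [Algebra Fq K]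

/-- The degree of a divisor `D = ∑ c_𝔭 𝔭` of the function field,
namely `∑ c_𝔭 deg 𝔭`. Divisors are modelled as finitely supported
`ℤ`-valued functions on the type `Place` of prime divisors of `K`. -/
def divDeg (deg : Place → ℕ) (D : Place →₀ ℤ) : ℤ :=
  D.sum fun p n => n * (deg p : ℤ)

/-- The Riemann-Roch space `L(D) = {a ∈ K^× : (a) + D ≥ 0} ∪ {0}`,
where `prin u` is the principal divisor of the nonzero element `u`. -/
def Lset (prin : Kˣ → (Place →₀ ℤ)) (D : Place →₀ ℤ) : Set K :=
  {a : K | a = 0 ∨ ∃ u : Kˣ, (u : K) = a ∧ 0 ≤ prin u + D}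

end FunctionFieldModel

/-- The group of `S`-units: the unit group `𝒪_S^×` of the ring of `S`-integers,
realised as the subgroup of `K^×` consisting of elements whose principal
divisor is supported inside `S` (no zeros or poles outside `S`). -/
def SUnits {K Place : Type*} [Field K] (prin : Kˣ → (Place →₀ ℤ))
    (hmul : ∀ a b : Kˣ, prin (a * b) = prin a + prin b)
    (S : Finset Place) : Subgroup Kˣ where
  carrier := {u : Kˣ | ∀ p ∉ S, prin u p = 0}
  mul_mem' := by
    intro a b ha hb p hp
    rw [hmul]
    simp [Finsupp.add_apply, ha p hp, hb p hp]
  one_mem' := by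
    intro p hp
    have h1 : prin (1 : Kˣ) = 0 := by
      have h := hmul 1 1
      rw [mul_one] at h
      exact (left_eq_add.mp h)
    simp [h1]
  inv_mem' := by
    intro u hu p hp
    have h1 : prin (1 : Kˣ) = 0 := by
      have h := hmul 1 1
      rw [mul_one] at h
      exact (left_eq_add.mp h)
    have h2 : prin u + prin u⁻¹ = 0 := by
      rw [← hmul, mul_inv_cancel, h1]
    have h3 := congrArg (fun f : Place →₀ ℤ => f p) h2
    simp only [Finsupp.add_apply, Finsupp.coe_zero, Pi.zero_apply] at h3
    have h4 := hu p hp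
    omega

section Aux
variable {K Place : Type*} [Field K]
variable (prin : Kˣ → (Place →₀ ℤ)) (hmul : ∀ a b : Kˣ, prin (a * b) = prin a + prin b)
include hmul

lemma prin_one' : prin 1 = 0 := by
  have h := hmul 1 1; rw [mul_one] at h; exact (left_eq_add.mp h)

lemma prin_inv' (a : Kˣ) : prin a⁻¹ = - prin a := by
  have h := hmul a a⁻¹
  rw [mul_inv_cancel, prin_one' prin hmul] at h
  exact eq_neg_of_add_eq_zero_right h.symm

lemma prin_zpow' (a : Kˣ) (z : ℤ) : prin (a ^ z) = z • prin a := by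
  have hpow : ∀ n : ℕ, prin (a ^ n) = n • prin a := by
    intro n
    induction n with
    | zero => simpa using prin_one' prin hmul
    | succ k ih => rw [pow_succ, hmul, ih, add_smul, one_smul]
  obtain ⟨n, rfl | rfl⟩ := z.eq_nat_or_neg
  · rw [zpow_natCast, hpow, natCast_zsmul]
  · rw [zpow_neg, zpow_natCast, prin_inv' prin hmul, hpow, neg_smul, natCast_zsmul]

end Aux

section Deg
variable {Place : Type*} (deg : Place → ℕ)

lemma divDeg_add (D E : Place →₀ ℤ) : divDeg deg (D + E) = divDeg deg D + divDeg deg E :=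
  Finsupp.sum_add_index' (fun _ => by simp) (fun _ _ _ => by ring)

lemma divDeg_single (p : Place) (c : ℤ) : divDeg deg (Finsupp.single p c) = c * deg p := by
  unfold divDeg
  exact Finsupp.sum_single_index (by simp)

lemma divDeg_nonneg {D : Place →₀ ℤ} (hD : 0 ≤ D) : 0 ≤ divDeg deg D := by
  apply Finset.sum_nonneg
  intro p hp
  exact mul_nonneg (Finsupp.le_def.mp hD p) (by positivity)

end Deg
section Deg
variable {Place : Type*} (deg : Place → ℕ)

lemma term_le_divDeg {D : Place →₀ ℤ} (hD : 0 ≤ D) (p : Place) :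
    D p * (deg p : ℤ) ≤ divDeg deg D := by
  by_cases hp : p ∈ D.support
  · exact Finset.single_le_sum (fun q _ => mul_nonneg (Finsupp.le_def.mp hD q) (by positivity)) hp
  · rw [Finsupp.notMem_support_iff.mp hp]
    simpa using divDeg_nonneg deg hD

lemma effective_finite (hdeg : ∀ p, 0 < deg p)
    (hfin : ∀ n : ℕ, {p : Place | deg p ≤ n}.Finite) (d : ℕ) :
    {D : Place →₀ ℤ | 0 ≤ D ∧ divDeg deg D ≤ (d : ℤ)}.Finite := by
  set s := {D : Place →₀ ℤ | 0 ≤ D ∧ divDeg deg D ≤ (d : ℤ)}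
  have hbound : ∀ D ∈ s, ∀ p : Place, D p ∈ Finset.Icc (0:ℤ) d := by
    rintro D ⟨hD0, hDd⟩ p
    have h1 : (0:ℤ) ≤ D p := Finsupp.le_def.mp hD0 p
    have h2 : D p * (deg p : ℤ) ≤ d := le_trans (term_le_divDeg deg hD0 p) hDd
    have h3 : D p ≤ D p * (deg p : ℤ) := by
      nlinarith [hdeg p, (Nat.one_le_cast (α := ℤ)).mpr (hdeg p)]
    simp only [Finset.mem_Icc]
    omega
  have hsupp : ∀ D ∈ s, ∀ p : Place, D p ≠ 0 → p ∈ (hfin d).toFinset := by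
    rintro D ⟨hD0, hDd⟩ p hp
    have h1 : (0:ℤ) ≤ D p := Finsupp.le_def.mp hD0 p
    have h2 : D p * (deg p : ℤ) ≤ d := le_trans (term_le_divDeg deg hD0 p) hDd
    have h4 : 1 ≤ D p := by omega
    have h3 : (deg p : ℤ) ≤ D p * (deg p : ℤ) := by nlinarith [(Nat.cast_pos (α := ℤ)).mpr (hdeg p)]
    simp only [Set.Finite.mem_toFinset, Set.mem_setOf_eq]
    exact_mod_cast le_trans h3 h2
  have : Finite ↥s := by
    apply Finite.of_injective
      (f := fun D : ↥s => fun p : ((hfin d).toFinset : Finset Place) =>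
        (⟨D.1 p, hbound D.1 D.2 p⟩ : Finset.Icc (0:ℤ) d))
    intro D D' h
    ext1
    ext p
    by_cases hp : p ∈ (hfin d).toFinset
    · exact congrArg Subtype.val (congrFun h ⟨p, hp⟩)
    · have h1 : D.1 p = 0 := by by_contra hc; exact hp (hsupp D.1 D.2 p hc)
      have h2 : D'.1 p = 0 := by by_contra hc; exact hp (hsupp D'.1 D'.2 p hc)
      rw [h1, h2]
  exact Set.toFinite s

end Deg

lemma exists_elt {Fq K Place : Type*} [Field Fq] [Fintype Fq] [Field K] [Algebra Fq K]
    (q : ℕ) (hq : Fintype.card Fq = q)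
    (deg : Place → ℕ)
    (prin : Kˣ → (Place →₀ ℤ))
    (ell : (Place →₀ ℤ) → ℕ)
    (hell : ∀ D : Place →₀ ℤ, Nat.card (Lset prin D) = q ^ ell D)
    (g : ℕ) (Can : Place →₀ ℤ)
    (hRR : ∀ D : Place →₀ ℤ, (ell D : ℤ) = divDeg deg D - g + 1 + ell (Can - D))
    (D : Place →₀ ℤ) (hD : (g : ℤ) ≤ divDeg deg D) :
    ∃ u : Kˣ, 0 ≤ prin u + D := by
  have hq2 : 2 ≤ q := hq ▸ Fintype.one_lt_card
  have hellD : 1 ≤ ell D := by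
    have h := hRR D
    have h2 : (0:ℤ) ≤ ell (Can - D) := Int.natCast_nonneg _
    omega
  have hcard : 2 ≤ Nat.card (Lset prin D) := by
    rw [hell D]
    calc 2 ≤ q := hq2
    _ = q ^ 1 := (pow_one q).symm
    _ ≤ q ^ ell D := Nat.pow_le_pow_right (by omega) hellD
  by_contra hc
  push_neg at hc
  have : Lset prin D = {0} := by
    ext a
    simp only [Lset, Set.mem_setOf_eq, Set.mem_singleton_iff]
    constructor
    · rintro (rfl | ⟨u, rfl, hu⟩)
      · rfl
      · exact absurd hu (hc u)
    · rintro rfl; exact Or.inl rfl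
  rw [this] at hcard
  simp [Nat.card_unique] at hcard

lemma exists_sunit {Fq K Place : Type*} [Field Fq] [Fintype Fq] [Field K] [Algebra Fq K]
    (q : ℕ) (hq : Fintype.card Fq = q)
    (deg : Place → ℕ) (hdeg : ∀ p, 0 < deg p)
    (hfin : ∀ n : ℕ, {p : Place | deg p ≤ n}.Finite)
    (prin : Kˣ → (Place →₀ ℤ))
    (hmul : ∀ a b : Kˣ, prin (a * b) = prin a + prin b)
    (hdegprin : ∀ u : Kˣ, divDeg deg (prin u) = 0)
    (ell : (Place →₀ ℤ) → ℕ)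
    (hell : ∀ D : Place →₀ ℤ, Nat.card (Lset prin D) = q ^ ell D)
    (g : ℕ) (Can : Place →₀ ℤ)
    (hRR : ∀ D : Place →₀ ℤ, (ell D : ℤ) = divDeg deg D - g + 1 + ell (Can - D))
    (p qp : Place) (hpq : p ≠ qp) :
    ∃ u : Kˣ, prin u p ≠ 0 ∧ ∀ p', p' ≠ p → p' ≠ qp → prin u p' = 0 := by
  set E : ℕ → (Place →₀ ℤ) := fun n =>
    Finsupp.single p ((n : ℤ) * deg qp + g) + Finsupp.single qp (-((n : ℤ) * deg p)) with hE
  have e1 : ∀ k : ℕ, E k p = (k : ℤ) * deg qp + g := by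
    intro k
    simp [hE, Finsupp.single_eq_of_ne' (Ne.symm hpq)]
  have e3 : ∀ (k : ℕ) (p' : Place), p' ≠ p → p' ≠ qp → E k p' = 0 := by
    intro k p' h1 h2
    simp [hE, Finsupp.single_eq_of_ne' (Ne.symm h1), Finsupp.single_eq_of_ne' (Ne.symm h2)]
  have hdegE : ∀ n, divDeg deg (E n) = (g : ℤ) * deg p := by
    intro n
    rw [hE]
    simp only [divDeg_add, divDeg_single]
    ring
  have hgle : (g : ℤ) ≤ (g : ℤ) * deg p := by
    nlinarith [(Nat.one_le_cast (α := ℤ)).mpr (hdeg p)]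
  have hu : ∀ n : ℕ, ∃ u : Kˣ, 0 ≤ prin u + E n := fun n =>
    exists_elt q hq deg prin ell hell g Can hRR (E n) (by rw [hdegE]; exact hgle)
  choose u huu using hu
  have hFdeg : ∀ n, divDeg deg (prin (u n) + E n) ≤ ((g * deg p : ℕ) : ℤ) := by
    intro n
    rw [divDeg_add, hdegprin, hdegE]
    push_cast
    simp
  set Eff := {D : Place →₀ ℤ | 0 ≤ D ∧ divDeg deg D ≤ ((g * deg p : ℕ) : ℤ)} with hEff
  have : Finite ↥Eff := effective_finite deg hdeg hfin _
  obtain ⟨n, m, hnm, heq⟩ := Finite.exists_ne_map_eq_of_infinite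
    (fun n : ℕ => (⟨prin (u n) + E n, ⟨huu n, hFdeg n⟩⟩ : ↥Eff))
  have heq' : prin (u n) + E n = prin (u m) + E m := congrArg Subtype.val heq
  have hw : prin (u n * (u m)⁻¹) = E m - E n := by
    rw [hmul, prin_inv' prin hmul, ← sub_eq_add_neg, sub_eq_sub_iff_add_eq_add]
    rw [heq']
    abel
  refine ⟨u n * (u m)⁻¹, ?_, ?_⟩
  · rw [hw, Finsupp.sub_apply, e1, e1]
    intro hzero
    have h0 : ((m : ℤ) - n) * deg qp = 0 := by linear_combination hzero
    rcases mul_eq_zero.mp h0 with h | h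
    · have : (m : ℤ) = n := by linarith
      exact hnm (by exact_mod_cast this.symm)
    · exact (hdeg qp).ne' (by exact_mod_cast h)
  · intro p' h1 h2
    rw [hw, Finsupp.sub_apply, e3 m p' h1 h2, e3 n p' h1 h2, sub_zero]

/-- The `S`-unit theorem for function fields (Rosen, Proposition 14.2): for a
function field `K` over `𝔽_q` with `𝔽_q` as field of constants and
`|S| = r + 1`, the unit group of the ring of `S`-integers is isomorphic to
`ℤ^r × 𝔽_q^×`. -/
theorem S_unit_theorem
    {Fq K Place : Type*} [Field Fq] [Fintype Fq] [Field K] [Algebra Fq K]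

    (q : ℕ) (hq : Fintype.card Fq = q)
    (deg : Place → ℕ) (hdeg : ∀ p, 0 < deg p)
    (hfin : ∀ n : ℕ, {p : Place | deg p ≤ n}.Finite)
    (prin : Kˣ → (Place →₀ ℤ))
    (hmul : ∀ a b : Kˣ, prin (a * b) = prin a + prin b)
    (hadd : ∀ a b c : Kˣ, (a : K) + (b : K) = (c : K) →
      ∀ p, min (prin a p) (prin b p) ≤ prin c p)
    (hconst : ∀ c : Fqˣ, prin (Units.map (algebraMap Fq K).toMonoidHom c) = 0)
    (hdegprin : ∀ u : Kˣ, divDeg deg (prin u) = 0)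
    (ell : (Place →₀ ℤ) → ℕ)
    (hell : ∀ D : Place →₀ ℤ, Nat.card (Lset prin D) = q ^ ell D)
    (g : ℕ) (Can : Place →₀ ℤ)
    (hRR : ∀ D : Place →₀ ℤ,
      (ell D : ℤ) = divDeg deg D - g + 1 + ell (Can - D))
    (hCan : divDeg deg Can = 2 * (g : ℤ) - 2)
    (hexact : ∀ u : Kˣ, prin u = 0 →
      ∃ c : Fqˣ, Units.map (algebraMap Fq K).toMonoidHom c = u)
    (S : Finset Place) (r : ℕ) (hS : S.card = r + 1) :
    Nonempty ((SUnits prin hmul S) ≃* ((Fin r → Multiplicative ℤ) × Fqˣ)) := by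
  classical
  set G := SUnits prin hmul S with hG
  -- enumeration of S
  let Eqv : ↥S ≃ Fin (r + 1) := S.equivFinOfCardEq hS
  let e : Fin (r + 1) → Place := fun i => ((Eqv.symm i : ↥S) : Place)
  have he_mem : ∀ i, e i ∈ S := fun i => (Eqv.symm i).2
  have he_inj : Function.Injective e := fun i j h => by
    have := Eqv.symm.injective (Subtype.ext h)
    exact this
  have he_surj : ∀ p ∈ S, ∃ i, e i = p := fun p hp =>
    ⟨Eqv ⟨p, hp⟩, by simp [e]⟩
  set ω := e (Fin.last r) with hω
  have hmemG : ∀ x : Kˣ, x ∈ G ↔ ∀ p ∉ S, prin x p = 0 := fun x => Iff.rfl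
  -- the valuation vector map
  set val : ↥G → (Fin r → ℤ) := fun u i => prin (↑u : Kˣ) (e i.castSucc) with hval
  have val_mul : ∀ u v : ↥G, val (u * v) = val u + val v := by
    intro u v; funext i
    simp [hval, hmul]
  have val_one : val 1 = 0 := by
    funext i; simp [hval, prin_one' prin hmul]
  have val_inv : ∀ u : ↥G, val u⁻¹ = - val u := by
    intro u; funext i
    simp [hval, prin_inv' prin hmul]
  have val_zpow : ∀ (u : ↥G) (z : ℤ), val (u ^ z) = z • val u := by
    intro u z; funext i
    have hcoe : ((u ^ z : ↥G) : Kˣ) = (u : Kˣ) ^ z := by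
      simp
    simp [hval, hcoe, prin_zpow' prin hmul]
  have val_prod : ∀ (f : Fin r → ↥G) (s : Finset (Fin r)),
      val (∏ i ∈ s, f i) = ∑ i ∈ s, val (f i) := by
    intro f s
    induction s using Finset.induction_on with
    | empty => simpa using val_one
    | @insert a s h ih => rw [Finset.prod_insert h, Finset.sum_insert h, val_mul, ih]
  -- kernel characterization
  have hker : ∀ u : ↥G, val u = 0 → prin (↑u : Kˣ) = 0 := by
    intro u h0
    have hsupp : ∀ p', p' ≠ ω → prin (↑u : Kˣ) p' = 0 := by
      intro p' hne
      by_cases hpS : p' ∈ S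
      · obtain ⟨i, rfl⟩ := he_surj p' hpS
        have hi : i ≠ Fin.last r := fun h => hne (congrArg e h)
        obtain ⟨j, rfl⟩ := Fin.exists_castSucc_eq.mpr hi
        simpa [hval] using congrFun h0 j
      · exact ((hmemG ↑u).mp u.2) p' hpS
    have hD : prin (↑u : Kˣ) = Finsupp.single ω (prin (↑u : Kˣ) ω) := by
      ext p'
      by_cases h : p' = ω
      · subst h; simp
      · rw [hsupp p' h, Finsupp.single_eq_of_ne' (Ne.symm h)]
    have hdd := hdegprin (↑u : Kˣ)
    rw [hD, divDeg_single] at hdd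
    have hc : prin (↑u : Kˣ) ω = 0 := by
      rcases mul_eq_zero.mp hdd with h | h
      · exact h
      · exact absurd (by exact_mod_cast h) (hdeg ω).ne'
    rw [hD, hc, Finsupp.single_zero]
  -- the constants embedding
  have hconst_mem : ∀ c : Fqˣ, (Units.map (algebraMap Fq K).toMonoidHom c) ∈ G := by
    intro c
    rw [hmemG]
    intro p hp
    rw [hconst c]
    simp
  set ι : Fqˣ →* ↥G :=
    { toFun := fun c => ⟨Units.map (algebraMap Fq K).toMonoidHom c, hconst_mem c⟩
      map_one' := Subtype.ext (by simp)
      map_mul' := fun a b => Subtype.ext (by simp) } with hι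
  have ι_inj : ∀ c : Fqˣ, ι c = 1 → c = 1 := by
    intro c hc
    have h1 : (Units.map (algebraMap Fq K).toMonoidHom c : Kˣ) = 1 :=
      congrArg Subtype.val hc
    have h2 : algebraMap Fq K (c : Fq) = algebraMap Fq K 1 := by
      simpa using congrArg Units.val h1
    exact Units.ext ((algebraMap Fq K).injective h2)
  have val_ι : ∀ c : Fqˣ, val (ι c) = 0 := by
    intro c; funext i
    show (prin (Units.map (algebraMap Fq K).toMonoidHom c)) (e i.castSucc) = (0 : Fin r → ℤ) i
    rw [hconst c]
    rfl
  -- the image submodule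
  set W : Submodule ℤ (Fin r → ℤ) := Submodule.span ℤ (Set.range val) with hW
  have hvalW : ∀ u : ↥G, val u ∈ W := fun u => Submodule.subset_span ⟨u, rfl⟩
  have hWrep : ∀ x, x ∈ W → ∃ u : ↥G, val u = x := by
    intro x hx
    induction hx using Submodule.span_induction with
    | mem x h => obtain ⟨u, rfl⟩ := h; exact ⟨u, rfl⟩
    | zero => exact ⟨1, val_one⟩
    | add x y hx hy ihx ihy =>
        obtain ⟨u, rfl⟩ := ihx
        obtain ⟨v, rfl⟩ := ihy
        exact ⟨u * v, val_mul u v⟩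
    | smul z x hx ih =>
        obtain ⟨u, rfl⟩ := ih
        exact ⟨u ^ z, val_zpow u z⟩
  -- independent S-units
  have hUex : ∀ i : Fin r, ∃ u : Kˣ, prin u (e i.castSucc) ≠ 0 ∧
      ∀ p', p' ≠ e i.castSucc → p' ≠ ω → prin u p' = 0 := by
    intro i
    exact exists_sunit q hq deg hdeg hfin prin hmul hdegprin ell hell g Can hRR _ _
      (fun h => (Fin.castSucc_lt_last i).ne (he_inj h))
  choose U hU1 hU2 using hUex
  have hUmem : ∀ i, U i ∈ G := by
    intro i
    rw [hmemG]
    intro p hp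
    exact hU2 i p (fun h => hp (h ▸ he_mem _)) (fun h => hp (h ▸ he_mem _))
  set UU : Fin r → ↥G := fun i => ⟨U i, hUmem i⟩ with hUU
  have hvalU0 : ∀ i j, j ≠ i → val (UU i) j = 0 := by
    intro i j hij
    exact hU2 i _ (fun h => hij (Fin.castSucc_injective _ (he_inj h)))
      (fun h => (Fin.castSucc_lt_last j).ne (he_inj h))
  have hvalU1 : ∀ i, val (UU i) i ≠ 0 := fun i => hU1 i
  have hindep : LinearIndependent ℤ (fun i => val (UU i)) := by
    rw [Fintype.linearIndependent_iff]
    intro c hc j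
    have h1 : ∑ i, c i * val (UU i) j = 0 := by
      have := congrFun hc j
      simpa using this
    rw [Finset.sum_eq_single j
      (fun i _ hij => by rw [hvalU0 i j (Ne.symm hij), mul_zero])
      (fun h => absurd (Finset.mem_univ j) h)] at h1
    rcases mul_eq_zero.mp h1 with h | h
    · exact h
    · exact absurd h (hvalU1 j)
  -- basis of W
  obtain ⟨nb, bb⟩ := Submodule.basisOfPid (Pi.basisFun ℤ (Fin r)) W
  have hfr1 : Module.finrank ℤ ↥W = nb := by
    rw [Module.finrank_eq_card_basis bb, Fintype.card_fin]
  have hfr_le : Module.finrank ℤ ↥W ≤ r :=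
    le_trans (Submodule.finrank_le W) (by simp)
  have hfr_ge : r ≤ Module.finrank ℤ ↥W := by
    have hindepW : LinearIndependent ℤ
        (fun i => (⟨val (UU i), hvalW (UU i)⟩ : ↥W)) := by
      apply LinearIndependent.of_comp W.subtype
      exact hindep
    simpa using hindepW.fintype_card_le_finrank
  have hnb : nb = r := by omega
  set w : Module.Basis (Fin r) ℤ ↥W := bb.reindex (finCongr hnb) with hwdef
  have hg : ∀ i : Fin r, ∃ u : ↥G, val u = ↑(w i) := fun i => hWrep _ (w i).2
  choose gg hgg using hg
  -- the isomorphism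
  set Φfun : (Fin r → Multiplicative ℤ) × Fqˣ → ↥G := fun x =>
    (∏ i, gg i ^ (Multiplicative.toAdd (x.1 i))) * ι x.2 with hΦfun
  set Φ : (Fin r → Multiplicative ℤ) × Fqˣ →* ↥G :=
    { toFun := Φfun
      map_one' := by simp [hΦfun]
      map_mul' := by
        intro x y
        simp only [hΦfun, Prod.fst_mul, Prod.snd_mul, Pi.mul_apply, toAdd_mul, zpow_add,
          Finset.prod_mul_distrib, map_mul]
        exact mul_mul_mul_comm _ _ _ _ } with hΦ
  have val_Φ : ∀ x, val (Φ x) = ∑ i, (Multiplicative.toAdd (x.1 i)) • val (gg i) := by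
    intro x
    show val (Φfun x) = _
    simp only [hΦfun]
    rw [val_mul, val_ι, add_zero, val_prod]
    exact Finset.sum_congr rfl (fun i _ => val_zpow _ _)
  have hinj : Function.Injective Φ := by
    rw [injective_iff_map_eq_one]
    intro x hx
    have h1 : ∑ i, (Multiplicative.toAdd (x.1 i)) • val (gg i) = 0 := by
      rw [← val_Φ x, hx, val_one]
    simp only [hgg] at h1
    have h2 : ∑ i, (Multiplicative.toAdd (x.1 i)) • (w i) = (0 : ↥W) := by
      apply Submodule.injective_subtype W
      rw [map_sum, map_zero]
      simpa using h1
    have h3 := Fintype.linearIndependent_iff.mp w.linearIndependent _ h2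
    have hx1 : x.1 = 1 := by
      funext i
      exact Multiplicative.toAdd.injective (h3 i)
    have hΦι : Φ x = ι x.2 := by
      show Φfun x = _
      simp only [hΦfun]
      rw [hx1]
      simp
    have hx2 : x.2 = 1 := ι_inj x.2 (by rw [← hΦι, hx])
    exact Prod.ext hx1 hx2
  have hsurj : Function.Surjective Φ := by
    intro u
    set x : ↥W := ⟨val u, hvalW u⟩ with hx
    set c : Fin r → ℤ := fun i => w.repr x i with hc
    have hrepr : ∑ i, c i • w i = x := w.sum_repr x
    set z : ↥G := ∏ i, gg i ^ c i with hz
    have hval_z : val z = val u := by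
      rw [hz, val_prod]
      have h4 : ∑ i, val (gg i ^ c i) = ∑ i, c i • ((w i : ↥W) : Fin r → ℤ) :=
        Finset.sum_congr rfl (fun i _ => by rw [val_zpow, hgg])
      rw [h4]
      have h5 := congrArg W.subtype hrepr
      rw [map_sum] at h5
      simpa using h5
    have hval0 : val (u * z⁻¹) = 0 := by
      rw [val_mul, val_inv, hval_z]
      simp
    obtain ⟨cc, hcc⟩ := hexact _ (hker _ hval0)
    refine ⟨(fun i => Multiplicative.ofAdd (c i), cc), ?_⟩
    show Φfun _ = u
    have hιcc : ι cc = u * z⁻¹ := Subtype.ext hcc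
    simp only [hΦfun]
    simp only [toAdd_ofAdd]
    rw [← hz, hιcc, mul_comm u z⁻¹, mul_inv_cancel_left]
  exact ⟨(MulEquiv.ofBijective Φ ⟨hinj, hsurj⟩).symm⟩
end
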